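/- Let S = [A_1, …, A_{d+1}] be a d-simplex in Euclidean d-space. For an interior point P of S, the cevian through A_j relative to P is the segment from A_j to the point where the line through A_j and P meets the opposite facet. Then the following are equivalent: (1) the centroid and the circumcenter of S coincide; (2) the d+1 cevians through the centroid (i.e., the medians from each vertex to the centroid of the opposite facet) all have equal length; (3) the d+1 cevians through the Fermat-Torricelli point all have equal length; (4) the circumcenter lies in S and the d+1 cevians through the circumcenter all have equal length. -/

import Mathlib

/-
Common geometric notions for simplices in Euclidean d-space, following
Edmonds–Hajja–Martini, "Coincidences of simplex centers and related facial
structures".  A d-simplex is given by its d+1 affinely independent vertices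
`A : Fin (d+1) → EuclideanSpace ℝ (Fin d)`.
-/

noncomputable section

abbrev Pt (d : ℕ) : Type := EuclideanSpace ℝ (Fin d)

variable {d : ℕ}

/-- The centroid of the simplex with vertices `A`: the average of the vertices. -/
def ctr (A : Fin (d+1) → Pt d) : Pt d := Finset.centroid ℝ Finset.univ A

/-- `C` is a circumcenter of the simplex with vertices `A`:
it is equidistant from all the vertices. -/
def IsCircumcenter (A : Fin (d+1) → Pt d) (C : Pt d) : Prop :=
  ∃ r : ℝ, ∀ i, dist C (A i) = r

/-- The affine span (hyperplane) of the facet opposite to vertex `j`. -/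
def facetSpan (A : Fin (d+1) → Pt d) (j : Fin (d+1)) : Set (Pt d) :=
  (affineSpan ℝ (A '' {i | i ≠ j}) : Set (Pt d))

/-- `I` is the incenter of the simplex with vertices `A`: an interior point
equidistant from the affine hyperplanes spanned by the facets. -/
def IsIncenter (A : Fin (d+1) → Pt d) (I : Pt d) : Prop :=
  I ∈ interior (convexHull ℝ (Set.range A)) ∧
    ∃ r : ℝ, ∀ j, Metric.infDist I (facetSpan A j) = r

/-- `F` is a Fermat-Torricelli point of the simplex with vertices `A`:
it minimizes the sum of the distances to the vertices. -/
def IsFermatPoint (A : Fin (d+1) → Pt d) (F : Pt d) : Prop :=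
  ∀ Q : Pt d, ∑ i, dist F (A i) ≤ ∑ i, dist Q (A i)

/-- The altitude of the simplex at vertex `j`: the distance from `A j` to the
affine span of the opposite facet. -/
def altitude (A : Fin (d+1) → Pt d) (j : Fin (d+1)) : ℝ :=
  Metric.infDist (A j) (facetSpan A j)

/-- Equiareal: all facets have the same `(d-1)`-dimensional volume; equivalently
(since `d · vol S = facet volume · altitude`), all altitudes are equal. -/
def Equiareal (A : Fin (d+1) → Pt d) : Prop :=
  ∀ j k, altitude A j = altitude A k

/-- `r` is the circumradius of the facet opposite `j`: some point of the affine
span of the facet is at distance `r` from all its vertices. -/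
def IsFacetCircumradius (A : Fin (d+1) → Pt d) (j : Fin (d+1)) (r : ℝ) : Prop :=
  ∃ C ∈ affineSpan ℝ (A '' {i | i ≠ j}), ∀ i, i ≠ j → dist C (A i) = r

/-- Equiradial: all facets have the same circumradius. -/
def Equiradial (A : Fin (d+1) → Pt d) : Prop :=
  ∃ r : ℝ, ∀ j, IsFacetCircumradius A j r

/-- Equifacetal: any two facets are congruent, i.e. there is an isometry of the
ambient space carrying the vertex set of one facet onto that of the other. -/
def Equifacetal (A : Fin (d+1) → Pt d) : Prop :=
  ∀ j k, ∃ f : Pt d ≃ᵢ Pt d, f '' (A '' {i | i ≠ j}) = A '' {i | i ≠ k}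

/-- Regular: all edges have equal length. -/
def Regular (A : Fin (d+1) → Pt d) : Prop :=
  ∀ i j k l, i ≠ j → k ≠ l → dist (A i) (A j) = dist (A k) (A l)

/-- `Q` is the foot of the cevian through vertex `A j` relative to the point `P`:
`Q` is the point where the line through `A j` and `P` meets the (affine span of
the) opposite facet. -/
def IsCevianFoot (A : Fin (d+1) → Pt d) (j : Fin (d+1)) (P Q : Pt d) : Prop :=
  Collinear ℝ ({A j, P, Q} : Set (Pt d)) ∧ Q ∈ affineSpan ℝ (A '' {i | i ≠ j})

/-- All `d+1` cevians through `P` exist and have equal lengths. -/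
def EqualCevians (A : Fin (d+1) → Pt d) (P : Pt d) : Prop :=
  ∃ L : ℝ, ∀ j, ∃ Q, IsCevianFoot A j P Q ∧ dist (A j) Q = L

/-! ### Auxiliary lemmas -/

section AnalysisAux

open RealInnerProductSpace

variable {E : Type*} [NormedAddCommGroup E] [InnerProductSpace ℝ E]

lemma s18_hasFDerivAt_norm {x : E} (hx : x ≠ 0) :
    HasFDerivAt (fun y : E => ‖y‖) (‖x‖⁻¹ • (innerSL ℝ x)) x := by
  have hin : HasFDerivAt (fun y : E => (⟪y, y⟫ : ℝ))
      ((fderivInnerCLM ℝ ((x : E), (x : E))).comp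
        ((ContinuousLinearMap.id ℝ E).prod (ContinuousLinearMap.id ℝ E))) x :=
    (hasFDerivAt_id x).inner ℝ (hasFDerivAt_id x)
  have hs : (⟪x, x⟫ : ℝ) ≠ 0 := (inner_self_ne_zero (𝕜 := ℝ)).2 hx
  have hsq := HasDerivAt.comp_hasFDerivAt (f := fun y : E => (⟪y, y⟫ : ℝ)) x
    (Real.hasDerivAt_sqrt hs) hin
  have heq : (Real.sqrt ∘ fun y : E => (⟪y, y⟫ : ℝ)) = fun y : E => ‖y‖ := by
    ext y; rw [Function.comp_apply, ← norm_eq_sqrt_real_inner]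
  rw [heq] at hsq
  refine hsq.congr_fderiv (Eq.symm ?_)
  have hnx : Real.sqrt ⟪x, x⟫ = ‖x‖ := (norm_eq_sqrt_real_inner x).symm
  have hxn : ‖x‖ ≠ 0 := norm_ne_zero_iff.2 hx
  ext v
  simp only [ContinuousLinearMap.smul_apply, innerSL_apply_apply, smul_eq_mul,
    ContinuousLinearMap.coe_smul', Pi.smul_apply, ContinuousLinearMap.coe_comp',
    Function.comp_apply, ContinuousLinearMap.prod_apply, ContinuousLinearMap.coe_id', _root_.id,
    fderivInnerCLM_apply, hnx]
  rw [real_inner_comm v x]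
  field_simp
  ring

lemma s18_hasFDerivAt_dist {x a : E} (hx : x ≠ a) :
    HasFDerivAt (fun y : E => dist y a) (‖x - a‖⁻¹ • (innerSL ℝ (x - a))) x := by
  have h1 : HasFDerivAt (fun y : E => y - a) (ContinuousLinearMap.id ℝ E) x :=
    (hasFDerivAt_id x).sub_const a
  have h2 := (s18_hasFDerivAt_norm (sub_ne_zero.2 hx)).comp x h1
  have heq : ((fun y : E => ‖y‖) ∘ fun y : E => y - a) = fun y : E => dist y a := by
    ext y; simp [dist_eq_norm]
  rw [heq] at h2
  simpa using h2

lemma s18_fermat_grad {n : ℕ} (A : Fin n → E) {F : E}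
    (hF : ∀ Q : E, ∑ i, dist F (A i) ≤ ∑ i, dist Q (A i))
    (hne : ∀ i, F ≠ A i) :
    ∑ i, ‖F - A i‖⁻¹ • (F - A i) = 0 := by
  have hder : HasFDerivAt (fun Q : E => ∑ i, dist Q (A i))
      (∑ i, ‖F - A i‖⁻¹ • (innerSL ℝ (F - A i))) F :=
    HasFDerivAt.fun_sum fun i _ => s18_hasFDerivAt_dist (hne i)
  have hmin : IsLocalMin (fun Q : E => ∑ i, dist Q (A i)) F :=
    Filter.Eventually.of_forall hF
  have h0 : (∑ i, ‖F - A i‖⁻¹ • (innerSL ℝ (F - A i))) = 0 := by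
    rw [← hder.fderiv]; exact hmin.fderiv_eq_zero
  set w : E := ∑ i, ‖F - A i‖⁻¹ • (F - A i) with hw
  have h1 : (⟪w, w⟫ : ℝ) = 0 := by
    have h2 := congrArg (fun (f : E →L[ℝ] ℝ) => f w) h0
    simp only [ContinuousLinearMap.sum_apply, ContinuousLinearMap.smul_apply, innerSL_apply_apply,
      smul_eq_mul, ContinuousLinearMap.zero_apply] at h2
    rw [hw, sum_inner]
    simpa [real_inner_smul_left] using h2
  exact inner_self_eq_zero.1 h1

end AnalysisAux

section GeometryAux

open Finset AffineMap RealInnerProductSpace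

lemma s18_centroid_eq_smul_sum {d : ℕ} {ι : Type*} (s : Finset ι) (p : ι → Pt d)
    (hs : s.Nonempty) :
    s.centroid ℝ p = (s.card : ℝ)⁻¹ • ∑ i ∈ s, p i := by
  rw [Finset.centroid_def,
    s.affineCombination_eq_linear_combination _ _ (s.sum_centroidWeights_eq_one_of_nonempty ℝ hs)]
  simp [Finset.centroidWeights, Finset.smul_sum]

lemma s18_card_erase_univ {d : ℕ} (j : Fin (d+1)) : (Finset.univ.erase j).card = d := by
  rw [Finset.card_erase_of_mem (mem_univ j), Finset.card_univ, Fintype.card_fin]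
  omega

lemma s18_facet_centroid_vsub {d : ℕ} (hd : 1 ≤ d) (A : Fin (d+1) → Pt d) (j : Fin (d+1)) :
    (Finset.univ.erase j).centroid ℝ A - A j
      = (((d:ℝ)+1)/d) • (Finset.univ.centroid ℝ A - A j) := by
  have hne : (Finset.univ.erase j).Nonempty := by
    rw [← Finset.card_pos, s18_card_erase_univ]; omega
  have h1 := s18_centroid_eq_smul_sum (Finset.univ.erase j) A hne
  have h2 := s18_centroid_eq_smul_sum (Finset.univ : Finset (Fin (d+1))) A univ_nonempty
  rw [h1, h2, s18_card_erase_univ, Finset.card_univ, Fintype.card_fin,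
    Finset.sum_erase_eq_sub (mem_univ j)]
  have hd0 : (d : ℝ) ≠ 0 := by positivity
  have hd1 : ((d : ℝ) + 1) ≠ 0 := by positivity
  set S := ∑ i, A i
  push_cast
  match_scalars <;> field_simp <;> try ring

lemma s18_coord_eq_zero_of_mem_facetSpan {d : ℕ} (b : AffineBasis (Fin (d+1)) ℝ (Pt d))
    (j : Fin (d+1)) {x : Pt d} (hx : x ∈ affineSpan ℝ (⇑b '' {i | i ≠ j})) :
    b.coord j x = 0 := by
  have hsub : affineSpan ℝ (⇑b '' {i | i ≠ j})
      ≤ AffineSubspace.comap (b.coord j) (affineSpan ℝ ({0} : Set ℝ)) := by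
    rw [affineSpan_le]
    rintro y ⟨i, hi, rfl⟩
    rw [SetLike.mem_coe, AffineSubspace.mem_comap, b.coord_apply_ne (Ne.symm hi)]
    exact mem_affineSpan ℝ rfl
  have h2 := hsub hx
  rw [AffineSubspace.mem_comap,
    AffineSubspace.mem_affineSpan_singleton] at h2
  exact h2

lemma s18_facet_centroid_mem {d : ℕ} (hd : 1 ≤ d) (A : Fin (d+1) → Pt d) (j : Fin (d+1)) :
    (Finset.univ.erase j).centroid ℝ A ∈ affineSpan ℝ (A '' {i | i ≠ j}) := by
  have hne' : ∃ i : Fin (d+1), i ≠ j := by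
    by_cases h0 : j = ⟨0, by omega⟩
    · exact ⟨⟨1, by omega⟩, by rw [h0]; intro h; simpa [Fin.ext_iff] using h⟩
    · exact ⟨⟨0, by omega⟩, fun h => h0 h.symm⟩
  haveI : Nonempty {i : Fin (d+1) // i ≠ j} := ⟨⟨hne'.choose, hne'.choose_spec⟩⟩
  have him : A '' {i | i ≠ j} = Set.range (fun i : {i : Fin (d+1) // i ≠ j} => A i) := by
    ext y
    constructor
    · rintro ⟨i, hi, rfl⟩; exact ⟨⟨i, hi⟩, rfl⟩
    · rintro ⟨⟨i, hi⟩, rfl⟩; exact ⟨i, hi, rfl⟩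
  have hcent : (Finset.univ.erase j).centroid ℝ A
      = Finset.univ.centroid ℝ (fun i : {i : Fin (d+1) // i ≠ j} => A i) := by
    have hcard : (Finset.univ : Finset {i : Fin (d+1) // i ≠ j}).card = d := by
      rw [Finset.card_univ, Fintype.card_subtype_compl]
      simp
    rw [s18_centroid_eq_smul_sum _ _ (by rw [← Finset.card_pos, s18_card_erase_univ]; omega),
      s18_centroid_eq_smul_sum _ _ Finset.univ_nonempty, s18_card_erase_univ, hcard]
    congr 1
    rw [← Finset.sum_subtype (Finset.univ.erase j) (fun i => by simp [Finset.mem_erase]) A]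
  rw [him, hcent]
  exact centroid_mem_affineSpan_of_nonempty ℝ _ Finset.univ_nonempty

lemma s18_cevian_length {d : ℕ} (b : AffineBasis (Fin (d+1)) ℝ (Pt d)) (j : Fin (d+1))
    {P Q : Pt d} (hne : (b j : Pt d) ≠ P) (hQ : IsCevianFoot (⇑b) j P Q) :
    b.coord j P ≠ 1 ∧ dist (b j) Q = dist (b j) P / |1 - b.coord j P| := by
  obtain ⟨hcol, hmem⟩ := hQ
  have hQline : Q ∈ line[ℝ, (b j : Pt d), P] :=
    hcol.mem_affineSpan_of_mem_of_ne (Set.mem_insert _ _)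
      (Set.mem_insert_of_mem _ (Set.mem_insert _ _))
      (Set.mem_insert_of_mem _ (Set.mem_insert_of_mem _ rfl)) hne
  have hmem' : (Q -ᵥ (b j : Pt d)) +ᵥ (b j : Pt d) ∈ line[ℝ, (b j : Pt d), P] := by
    rwa [vsub_vadd]
  obtain ⟨t, ht⟩ := vadd_left_mem_affineSpan_pair.1 hmem'
  have hQ0 : b.coord j Q = 0 := s18_coord_eq_zero_of_mem_facetSpan b j hmem
  have hQeq : Q = t • (P -ᵥ (b j : Pt d)) +ᵥ (b j : Pt d) := by rw [ht, vsub_vadd]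
  set μ := b.coord j P with hμ
  have hcoord : (0:ℝ) = t * (μ - 1) + 1 := by
    rw [← hQ0, hQeq, AffineMap.map_vadd, LinearMap.map_smul, AffineMap.linearMap_vsub,
      b.coord_apply_eq]
    simp [vadd_eq_add, smul_eq_mul, hμ]
  have hμ1 : μ ≠ 1 := by
    intro h
    rw [h] at hcoord
    simp at hcoord
  have ht' : t * (1 - μ) = 1 := by linarith
  have h1μ : (1:ℝ) - μ ≠ 0 := sub_ne_zero.2 (Ne.symm hμ1)
  have htv : t = 1/(1-μ) := by field_simp at ht' ⊢; linarith
  refine ⟨hμ1, ?_⟩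
  have hdist : dist (b j : Pt d) Q = |t| * dist (b j : Pt d) P := by
    rw [dist_eq_norm_vsub (Pt d), dist_eq_norm_vsub (Pt d)]
    have h3 : (b j : Pt d) -ᵥ Q = -(t • (P -ᵥ (b j : Pt d))) := by
      rw [ht, neg_vsub_eq_vsub_rev]
    rw [h3, norm_neg, norm_smul, Real.norm_eq_abs, ← neg_vsub_eq_vsub_rev, norm_neg]
  rw [hdist, htv]
  rw [abs_div, abs_one, div_mul_eq_mul_div, one_mul, abs_sub_comm]

lemma s18_isFermat_centroid {d : ℕ} (A : Fin (d+1) → Pt d) {r : ℝ} (hr : 0 < r)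
    (h : ∀ i, dist (Finset.univ.centroid ℝ A) (A i) = r) (Q : Pt d) :
    ∑ i, dist (Finset.univ.centroid ℝ A) (A i) ≤ ∑ i, dist Q (A i) := by
  set G := Finset.univ.centroid ℝ A with hG
  have hsum0 : ∑ i, (G - A i) = 0 := by
    have hGs : G = ((d:ℝ)+1)⁻¹ • ∑ i, A i := by
      rw [hG, s18_centroid_eq_smul_sum _ _ Finset.univ_nonempty, Finset.card_univ,
        Fintype.card_fin]
      push_cast; ring_nf
    rw [Finset.sum_sub_distrib, Finset.sum_const, Finset.card_univ, Fintype.card_fin, hGs,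
      ← Nat.cast_smul_eq_nsmul ℝ, smul_smul]
    push_cast
    rw [mul_inv_cancel₀ (by positivity), one_smul, sub_self]
  have key2 : ∑ i, (⟪G - A i, Q - A i⟫ : ℝ) = (↑d+1) * r^2 := by
    have h3 : ∀ i, (⟪G - A i, Q - A i⟫ : ℝ) = ⟪G - A i, Q - G⟫ + r^2 := by
      intro i
      have hQ : Q - A i = (Q - G) + (G - A i) := by abel
      rw [hQ, inner_add_right, real_inner_self_eq_norm_sq]
      have h4 : ‖G - A i‖ = r := by rw [← dist_eq_norm]; exact h i
      rw [h4]
    rw [Finset.sum_congr rfl (fun i _ => h3 i), Finset.sum_add_distrib, ← sum_inner,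
      hsum0]
    simp [Finset.card_univ]
  have hbound : ∀ i, (⟪G - A i, Q - A i⟫ : ℝ) / r ≤ dist Q (A i) := by
    intro i
    rw [div_le_iff₀ hr]
    calc (⟪G - A i, Q - A i⟫ : ℝ) ≤ ‖G - A i‖ * ‖Q - A i‖ := real_inner_le_norm _ _
      _ = dist Q (A i) * r := by
          rw [← dist_eq_norm, ← dist_eq_norm, h i, mul_comm]
  calc ∑ i, dist G (A i) = (↑d+1) * r := by
        rw [Finset.sum_congr rfl (fun i _ => h i)]
        simp [Finset.card_univ]
    _ = (∑ i, (⟪G - A i, Q - A i⟫ : ℝ)) / r := by rw [key2]; field_simp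
    _ = ∑ i, (⟪G - A i, Q - A i⟫ : ℝ) / r := by rw [Finset.sum_div]
    _ ≤ ∑ i, dist Q (A i) := Finset.sum_le_sum fun i _ => hbound i

lemma s18_ctr_cevianFoot {d : ℕ} (hd : 1 ≤ d) (A : Fin (d+1) → Pt d) (j : Fin (d+1)) :
    IsCevianFoot A j (Finset.univ.centroid ℝ A) ((Finset.univ.erase j).centroid ℝ A) ∧
    dist (A j) ((Finset.univ.erase j).centroid ℝ A)
      = (((d:ℝ)+1)/d) * dist (A j) (Finset.univ.centroid ℝ A) := by
  set G := Finset.univ.centroid ℝ A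
  set Gj := (Finset.univ.erase j).centroid ℝ A with hGj
  have hvec : Gj - A j = (((d:ℝ)+1)/d) • (G - A j) := s18_facet_centroid_vsub hd A j
  have hline : Gj ∈ line[ℝ, A j, G] := by
    have h5 := smul_vsub_vadd_mem_affineSpan_pair ((((d:ℝ)+1))/d) (A j) G
    have heq : (((d:ℝ)+1)/d) • (G -ᵥ A j) +ᵥ A j = Gj := by
      rw [vsub_eq_sub, vadd_eq_add, ← hvec]
      abel
    rwa [heq] at h5
  constructor
  · constructor
    · have hcol : Collinear ℝ ({Gj, A j, G} : Set (Pt d)) :=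
        collinear_insert_of_mem_affineSpan_pair hline
      have hset : ({A j, G, Gj} : Set (Pt d)) = {Gj, A j, G} := by
        ext x; simp only [Set.mem_insert_iff, Set.mem_singleton_iff]; tauto
      rw [hset]
      exact hcol
    · exact s18_facet_centroid_mem hd A j
  · rw [dist_eq_norm, dist_eq_norm, ← norm_neg (A j - Gj), ← norm_neg (A j - G),
      neg_sub, neg_sub, hvec, norm_smul, Real.norm_eq_abs]
    congr 1
    rw [abs_of_pos]
    positivity

end GeometryAux

set_option maxHeartbeats 2000000 in
/-- Theorem 5.1. For a `d`-simplex `S = [A 0, …, A d]` the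
following are equivalent: (1) the centroid and the circumcenter coincide;
(2) the `d+1` medians (the cevians through the centroid, from each vertex to
the centroid of the opposite facet) have equal lengths; (3) the cevians
through the Fermat-Torricelli point (which lies in the interior of `S`) have
equal lengths; (4) the circumcenter lies in `S` and the cevians through it
have equal lengths. -/
theorem statement18 (d : ℕ) (hd : 2 ≤ d)
    (A : Fin (d+1) → Pt d) (hA : AffineIndependent ℝ A) :
    [ IsCircumcenter A (ctr A),
      ∀ j k : Fin (d+1),
        dist (A j) (Finset.centroid ℝ (Finset.univ.erase j) A) =
          dist (A k) (Finset.centroid ℝ (Finset.univ.erase k) A),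
      ∃ F : Pt d, IsFermatPoint A F ∧ F ∈ interior (convexHull ℝ (Set.range A)) ∧
        EqualCevians A F,
      ∃ C : Pt d, IsCircumcenter A C ∧ C ∈ convexHull ℝ (Set.range A) ∧
        EqualCevians A C ].TFAE := by
  classical
  have hd1 : 1 ≤ d := by omega
  have hspan : affineSpan ℝ (Set.range A) = ⊤ :=
    hA.affineSpan_eq_top_iff_card_eq_finrank_add_one.2 (by simp)
  let b : AffineBasis (Fin (d+1)) ℝ (Pt d) := ⟨A, hA, hspan⟩
  have hbA : ⇑b = A := rfl
  have hctr : ctr A = Finset.univ.centroid ℝ A := rfl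
  have hctr_coord : ∀ j, b.coord j (ctr A) = ((d:ℝ)+1)⁻¹ := by
    intro j
    have h6 := b.coord_apply_centroid (s := Finset.univ) (Finset.mem_univ j)
    rw [Finset.card_univ, Fintype.card_fin] at h6
    rw [hctr, ← hbA, h6]
    push_cast
    ring
  have heq_ctr : ∀ x : Pt d, (∀ j, b.coord j x = ((d:ℝ)+1)⁻¹) → x = ctr A := by
    intro x hx
    exact b.ext_elem fun i => by rw [hx i, hctr_coord i]
  have hI01 : (⟨0, by omega⟩ : Fin (d+1)) ≠ ⟨1, by omega⟩ := by
    intro h; simpa [Fin.ext_iff] using h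
  have hcirc_pos : ∀ (C : Pt d) (r : ℝ), (∀ i, dist C (A i) = r) → 0 < r := by
    intro C r hr
    have h0 : 0 ≤ r := (hr ⟨0, by omega⟩) ▸ dist_nonneg
    rcases h0.lt_or_eq with h | h
    · exact h
    · exfalso
      have h1 : C = A ⟨0, by omega⟩ := dist_eq_zero.1 ((hr _).trans h.symm)
      have h2 : C = A ⟨1, by omega⟩ := dist_eq_zero.1 ((hr _).trans h.symm)
      exact hI01 (hA.injective (h1.symm.trans h2))
  have hcev_ctr : IsCircumcenter A (ctr A) → EqualCevians A (ctr A) := by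
    rintro ⟨r, hr⟩
    refine ⟨(((d:ℝ)+1)/d) * r, fun j => ?_⟩
    obtain ⟨hfoot, hlen⟩ := s18_ctr_cevianFoot hd1 A j
    rw [hctr]
    refine ⟨(Finset.univ.erase j).centroid ℝ A, hfoot, ?_⟩
    rw [hlen, ← hctr, dist_comm (A j) (ctr A), hr j]
  tfae_have 1 → 2 := by
    rintro ⟨r, hr⟩ j k
    have hj := (s18_ctr_cevianFoot hd1 A j).2
    have hk := (s18_ctr_cevianFoot hd1 A k).2
    rw [← hctr] at hj hk
    rw [hj, hk, dist_comm (A j) (ctr A), dist_comm (A k) (ctr A), hr j, hr k]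
  tfae_have 2 → 1 := by
    intro h2
    refine ⟨((d:ℝ)/(d+1)) *
      dist (A ⟨0, by omega⟩) (Finset.centroid ℝ (Finset.univ.erase ⟨0, by omega⟩) A),
      fun i => ?_⟩
    have hi := (s18_ctr_cevianFoot hd1 A i).2
    rw [← hctr, h2 i ⟨0, by omega⟩] at hi
    rw [dist_comm (ctr A) (A i), hi]
    have hd0 : (d:ℝ) ≠ 0 := by positivity
    field_simp
  tfae_have 1 → 3 := by
    intro h1
    obtain ⟨r, hr⟩ := h1
    have hrpos : 0 < r := hcirc_pos _ r hr
    refine ⟨ctr A, ?_, ?_, hcev_ctr ⟨r, hr⟩⟩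
    · intro Q
      exact s18_isFermat_centroid A hrpos (fun i => by rw [← hctr]; exact hr i) Q
    · rw [← hbA]
      exact b.centroid_mem_interior_convexHull
  tfae_have 1 → 4 := by
    intro h1
    refine ⟨ctr A, h1, ?_, hcev_ctr h1⟩
    rw [← hbA]
    exact interior_subset b.centroid_mem_interior_convexHull
  tfae_have 4 → 1 := by
    rintro ⟨C, ⟨r, hr⟩, hCh, ⟨L, hL⟩⟩
    have hrpos : 0 < r := hcirc_pos C r hr
    have hCne : ∀ j, (A j : Pt d) ≠ C := by
      intro j h
      have h5 := hr j
      rw [← h, dist_self] at h5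
      exact hrpos.ne h5
    rw [← hbA, b.convexHull_eq_nonneg_coord] at hCh
    have hsumC : ∑ i, b.coord i C = 1 := b.sum_coord_apply_eq_one C
    have hkey : ∀ j, b.coord j C < 1 ∧ r = L * (1 - b.coord j C) := by
      intro j
      obtain ⟨Q, hfoot, hdist⟩ := hL j
      obtain ⟨hne1, hlen⟩ := s18_cevian_length b j (hCne j) hfoot
      have hle1 : b.coord j C ≤ 1 := by
        have hadd := Finset.add_sum_erase _ (fun i => b.coord i C) (Finset.mem_univ j)
        rw [hsumC] at hadd
        have hnn : (0:ℝ) ≤ ∑ i ∈ Finset.univ.erase j, b.coord i C :=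
          Finset.sum_nonneg fun i _ => hCh i
        linarith
      have hlt1 : b.coord j C < 1 := lt_of_le_of_ne hle1 hne1
      refine ⟨hlt1, ?_⟩
      rw [hbA] at hlen
      rw [hdist, dist_comm (A j) C, hr j, abs_of_pos (by linarith)] at hlen
      rw [eq_div_iff (by linarith : (1:ℝ) - b.coord j C ≠ 0)] at hlen
      linarith
    have hLpos : 0 < L := by
      obtain ⟨hlt, heq⟩ := hkey ⟨0, by omega⟩
      nlinarith
    have hcoordC : ∀ j, b.coord j C = ((d:ℝ)+1)⁻¹ := by
      have hall : ∀ j, b.coord j C = 1 - r/L := by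
        intro j
        obtain ⟨_, heq⟩ := hkey j
        have hq : r/L = 1 - b.coord j C := by
          rw [div_eq_iff hLpos.ne']
          linear_combination heq
        linarith [hq]
      have hsum' : ((d:ℝ)+1) * (1 - r/L) = 1 := by
        have e : ∑ i, b.coord i C = ((d:ℝ)+1) * (1 - r/L) := by
          rw [Finset.sum_congr rfl (fun i _ => hall i), Finset.sum_const, Finset.card_univ,
            Fintype.card_fin, nsmul_eq_mul]
          push_cast
          ring
        rw [← e, hsumC]
      intro j
      rw [hall j]
      have hdpos : (0:ℝ) < (d:ℝ)+1 := by positivity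
      rw [inv_eq_one_div, eq_div_iff hdpos.ne']
      linear_combination hsum'
    have hCc : C = ctr A := heq_ctr C hcoordC
    rw [← hCc]
    exact ⟨r, hr⟩
  tfae_have 3 → 1 := by
    rintro ⟨F, hFermat, hInt, ⟨L, hL⟩⟩
    rw [← hbA, b.interior_convexHull] at hInt
    have hpos : ∀ i, 0 < b.coord i F := hInt
    have hsumF : ∑ i, b.coord i F = 1 := b.sum_coord_apply_eq_one F
    have hlt1 : ∀ j, b.coord j F < 1 := by
      intro j
      have hne : (Finset.univ.erase j).Nonempty := by
        rw [← Finset.card_pos, s18_card_erase_univ]; omega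
      have hpos' : 0 < ∑ i ∈ Finset.univ.erase j, b.coord i F :=
        Finset.sum_pos (fun i _ => hpos i) hne
      have hadd := Finset.add_sum_erase _ (fun i => b.coord i F) (Finset.mem_univ j)
      rw [hsumF] at hadd
      linarith
    have hFne : ∀ i, F ≠ A i := by
      intro i h
      have h7 : ∃ k : Fin (d+1), k ≠ i := by
        by_cases h0 : i = ⟨0, by omega⟩
        · exact ⟨⟨1, by omega⟩, by rw [h0]; intro hh; simpa [Fin.ext_iff] using hh⟩
        · exact ⟨⟨0, by omega⟩, fun hh => h0 hh.symm⟩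
      obtain ⟨k, hk⟩ := h7
      have h8 := hpos k
      rw [h, ← hbA, b.coord_apply_ne hk] at h8
      exact lt_irrefl 0 h8
    have hrpos : ∀ i, 0 < dist F (A i) := fun i => dist_pos.2 (hFne i)
    have hgrad : ∑ i, ‖F - A i‖⁻¹ • (F - A i) = 0 := s18_fermat_grad A hFermat hFne
    set s : ℝ := ∑ i, (dist F (A i))⁻¹ with hs
    have hspos : 0 < s :=
      Finset.sum_pos (fun i _ => inv_pos.2 (hrpos i)) Finset.univ_nonempty
    have hself : ∑ i, b.coord i F • A i = F := by
      have h9 := b.linear_combination_coord_eq_self F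
      rw [hbA] at h9
      exact h9
    have hrel : ∀ i, (dist F (A i))⁻¹ = s * b.coord i F := by
      have e1 : ∑ i, (dist F (A i))⁻¹ • A i = s • F := by
        have e2 : ∑ i, (dist F (A i))⁻¹ • (F - A i)
            = (∑ i, (dist F (A i))⁻¹) • F - ∑ i, (dist F (A i))⁻¹ • A i := by
          rw [Finset.sum_smul, ← Finset.sum_sub_distrib]
          congr 1
          ext i
          rw [smul_sub]
        have e3 : ∑ i, (dist F (A i))⁻¹ • (F - A i) = 0 := by
          rw [← hgrad]
          exact Finset.sum_congr rfl fun i _ => by rw [dist_eq_norm]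
        rw [e3, ← hs] at e2
        have e4 := sub_eq_zero.1 e2.symm
        exact e4.symm
      have haff := affineIndependent_iff.1 hA Finset.univ
        (fun i => (dist F (A i))⁻¹ - s * b.coord i F) ?_ ?_
      · intro i
        have h8 := haff i (Finset.mem_univ i)
        linarith
      · rw [Finset.sum_sub_distrib, ← Finset.mul_sum, hsumF, mul_one, ← hs, sub_self]
      · have e5 : ∑ i, ((dist F (A i))⁻¹ - s * b.coord i F) • A i
            = ∑ i, (dist F (A i))⁻¹ • A i - s • ∑ i, b.coord i F • A i := by
          rw [Finset.smul_sum, ← Finset.sum_sub_distrib]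
          congr 1
          ext i
          rw [sub_smul, smul_smul]
        rw [e5, e1, hself, sub_self]
    have hlen : ∀ j, dist F (A j) = L * (1 - b.coord j F) := by
      intro j
      obtain ⟨Q, hfoot, hdist⟩ := hL j
      obtain ⟨hne1, hlenQ⟩ := s18_cevian_length b j (Ne.symm (hFne j)) hfoot
      rw [hbA] at hlenQ
      rw [hdist, dist_comm (A j) F, abs_of_pos (by linarith [hlt1 j])] at hlenQ
      rw [eq_div_iff (by linarith [hlt1 j] : (1:ℝ) - b.coord j F ≠ 0)] at hlenQ
      linarith
    have hLpos : 0 < L := by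
      have h1 := hlen ⟨0, by omega⟩
      have h2 := hrpos ⟨0, by omega⟩
      have h3 := hlt1 (⟨0, by omega⟩ : Fin (d+1))
      nlinarith
    have hquad : ∀ j, s * L * (b.coord j F * (1 - b.coord j F)) = 1 := by
      intro j
      have h1 := hrel j
      have h2 := hlen j
      have h3 : (dist F (A j)) * (dist F (A j))⁻¹ = 1 := mul_inv_cancel₀ (hrpos j).ne'
      rw [h1, h2] at h3
      linear_combination h3
    have hallEq : ∀ j k, b.coord j F = b.coord k F := by
      intro j k
      by_contra hjk
      have hjkne : j ≠ k := fun h => hjk (by rw [h])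
      have hsL : s * L ≠ 0 := (mul_pos hspos hLpos).ne'
      have hcc : b.coord j F * (1 - b.coord j F) = b.coord k F * (1 - b.coord k F) :=
        mul_left_cancel₀ hsL ((hquad j).trans (hquad k).symm)
      have h0 : (b.coord j F - b.coord k F) * (1 - b.coord j F - b.coord k F) = 0 := by
        linear_combination hcc
      rcases mul_eq_zero.1 h0 with h | h
      · exact hjk (sub_eq_zero.1 h)
      · have hsum2 : b.coord j F + b.coord k F = 1 := by linarith
        have hm : ∃ m : Fin (d+1), m ≠ j ∧ m ≠ k := by
          have hc2 : ({j, k} : Finset (Fin (d+1))).card ≤ 2 :=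
            (Finset.card_insert_le _ _).trans (by simp)
          have hcpos : 0 < (({j, k} : Finset (Fin (d+1)))ᶜ).card := by
            rw [Finset.card_compl, Fintype.card_fin]
            omega
          obtain ⟨m, hm⟩ := Finset.card_pos.1 hcpos
          rw [Finset.mem_compl, Finset.mem_insert] at hm
          push_neg at hm
          rcases hm with ⟨hmj, hmk⟩
          exact ⟨m, hmj, by simpa using hmk⟩
        obtain ⟨m, hmj, hmk⟩ := hm
        have hsub : ({j, k, m} : Finset (Fin (d+1))) ⊆ Finset.univ := Finset.subset_univ _
        have h5 := Finset.sum_le_sum_of_subset_of_nonneg hsub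
          (fun i _ _ => (hpos i).le) (f := fun i => b.coord i F)
        rw [Finset.sum_insert (by simp [hjkne, Ne.symm hmj]),
          Finset.sum_insert (by simp [Ne.symm hmk]), Finset.sum_singleton, hsumF] at h5
        have h6 := hpos m
        linarith
    have hcoordF : ∀ j, b.coord j F = ((d:ℝ)+1)⁻¹ := by
      intro j
      have h1 : ∑ i, b.coord i F = ((d:ℝ)+1) * b.coord j F := by
        rw [Finset.sum_congr rfl (fun i _ => hallEq i j), Finset.sum_const,
          Finset.card_univ, Fintype.card_fin, nsmul_eq_mul]
        push_cast
        ring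
      rw [hsumF] at h1
      have hdpos : (0:ℝ) < (d:ℝ)+1 := by positivity
      rw [inv_eq_one_div, eq_div_iff hdpos.ne']
      linarith [h1]
    have hFc : F = ctr A := heq_ctr F hcoordF
    rw [← hFc]
    refine ⟨L * (1 - ((d:ℝ)+1)⁻¹), fun i => ?_⟩
    rw [hlen i, hcoordF i]
  tfae_finish
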